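/- Suppose x^k ∈ F \ {0} for all k, ‖x^k‖ → ∞, and x^k/‖x^k‖ converges weakly to v̄. Then v̄ belongs to the recession cone of F, i.e., T_i v̄ = 0 and ⟨c_i, v̄⟩ ≤ 0 for all i. -/

import Mathlib

noncomputable section
open Filter Topology RealInnerProductSpace

/-- weak convergence of a sequence in a Hilbert space -/
def WeakConv {H : Type*} [NormedAddCommGroup H] [InnerProductSpace ℝ H]
    (x : ℕ → H) (x₀ : H) : Prop :=
  ∀ y : H, Tendsto (fun k => ⟪x k, y⟫) atTop (𝓝 ⟪x₀, y⟫)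

/-- If `x^k ∈ F \ {0}`, `‖x^k‖ → ∞` and `x^k/‖x^k‖ ⇀ v̄` weakly,
then `v̄` lies in the recession cone of `F`: `T_i v̄ = 0` and `⟪c_i, v̄⟫ ≤ 0` for all `i`. -/
theorem stmt2 {H : Type*} [NormedAddCommGroup H] [InnerProductSpace ℝ H] [CompleteSpace H]
    {m : ℕ} (T : Fin m → H →L[ℝ] H) (c : Fin m → H) (α : Fin m → ℝ)
    (hsa : ∀ i, ∀ x y : H, ⟪T i x, y⟫ = ⟪x, T i y⟫)
    (hpsd : ∀ i, ∀ x : H, 0 ≤ ⟪x, T i x⟫)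
    (F : Set H)
    (hF : F = {x : H | ∀ i, (1 / 2) * ⟪x, T i x⟫ + ⟪c i, x⟫ + α i ≤ 0})
    (x : ℕ → H) (hxF : ∀ k, x k ∈ F) (hx0 : ∀ k, x k ≠ 0)
    (hnorm : Tendsto (fun k => ‖x k‖) atTop atTop)
    (v : H) (hconv : WeakConv (fun k => ‖x k‖⁻¹ • x k) v) :
    ∀ i, T i v = 0 ∧ ⟪c i, v⟫ ≤ 0 := by
  intro i
  have hNpos : ∀ k, (0:ℝ) < ‖x k‖ := fun k => norm_pos_iff.mpr (hx0 k)
  have hcons : ∀ k, (1 / 2) * ⟪x k, T i (x k)⟫ + ⟪c i, x k⟫ + α i ≤ 0 := by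
    intro k
    have := hxF k
    rw [hF] at this
    exact this i
  have hinv0 : Tendsto (fun k => ‖x k‖⁻¹) atTop (𝓝 0) := hnorm.inv_tendsto_atTop
  -- Step A : ⟪c i, v⟫ ≤ 0
  have hcv : ⟪c i, v⟫ ≤ 0 := by
    have hf : Tendsto (fun k => ‖x k‖⁻¹ * ⟪c i, x k⟫) atTop (𝓝 ⟪c i, v⟫) := by
      have := hconv (c i)
      simp only [real_inner_smul_left] at this
      have h2 : Tendsto (fun k => ⟪(‖x k‖⁻¹ • x k : H), c i⟫) atTop (𝓝 ⟪v, c i⟫) := hconv (c i)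
      simp only [real_inner_smul_left] at h2
      have heq : (fun k => ‖x k‖⁻¹ * ⟪c i, x k⟫) = fun k => ‖x k‖⁻¹ * ⟪x k, c i⟫ :=
        funext fun k => by rw [real_inner_comm]
      rw [heq, real_inner_comm]
      exact h2
    have hg : Tendsto (fun k => ‖x k‖⁻¹ * (-α i)) atTop (𝓝 0) := by
      simpa using hinv0.mul_const (-α i)
    refine le_of_tendsto_of_tendsto' hf hg ?_
    intro k
    have h1 : ⟪c i, x k⟫ ≤ -α i := by
      have := hpsd i (x k)
      have := hcons k
      linarith
    exact mul_le_mul_of_nonneg_left h1 (inv_nonneg.mpr (norm_nonneg _))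
  refine ⟨?_, hcv⟩
  -- Step B : ⟪v, T i v⟫ = 0
  have hvTv0 : ⟪v, T i v⟫ = 0 := by
    have hle : ⟪v, T i v⟫ ≤ 0 := by
      have hf : Tendsto (fun k => 2 * ⟪(‖x k‖⁻¹ • x k : H), T i v⟫ - ⟪v, T i v⟫)
          atTop (𝓝 ⟪v, T i v⟫) := by
        have h2 := (hconv (T i v)).const_mul 2
        have h3 := h2.sub_const ⟪v, T i v⟫
        convert h3 using 1
        ring_nf
      have hg : Tendsto (fun k => 2 * ‖c i‖ * ‖x k‖⁻¹ + 2 * |α i| * (‖x k‖⁻¹)^2)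
          atTop (𝓝 0) := by
        have h1 : Tendsto (fun k => 2 * ‖c i‖ * ‖x k‖⁻¹) atTop (𝓝 0) := by
          simpa using hinv0.const_mul (2 * ‖c i‖)
        have h2 : Tendsto (fun k => 2 * |α i| * (‖x k‖⁻¹)^2) atTop (𝓝 0) := by
          simpa using ((hinv0.mul hinv0).const_mul (2 * |α i|)).congr
            (fun k => by ring)
        simpa using h1.add h2
      refine le_of_tendsto_of_tendsto' hf hg ?_
      intro k
      set w : H := ‖x k‖⁻¹ • x k with hw
      have hN := hNpos k
      have hNinv : (0:ℝ) ≤ ‖x k‖⁻¹ := inv_nonneg.mpr (norm_nonneg _)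
      -- lower bound: 2⟪w, Tv⟫ - ⟪v,Tv⟫ ≤ ⟪w, Tw⟫
      have hlow : 2 * ⟪w, T i v⟫ - ⟪v, T i v⟫ ≤ ⟪w, T i w⟫ := by
        have h0 := hpsd i (w - v)
        have hexp : ⟪w - v, T i (w - v)⟫
            = ⟪w, T i w⟫ - 2 * ⟪w, T i v⟫ + ⟪v, T i v⟫ := by
          have hswap : ⟪v, T i w⟫ = ⟪w, T i v⟫ := by
            rw [← hsa i v w, real_inner_comm]
          rw [map_sub, inner_sub_left, inner_sub_right, inner_sub_right, hswap]
          ring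
        linarith [hexp ▸ h0]
      -- upper bound
      have hwTw : ⟪w, T i w⟫ = (‖x k‖⁻¹)^2 * ⟪x k, T i (x k)⟫ := by
        rw [hw, real_inner_smul_left, map_smul, real_inner_smul_right, sq]
        ring
      have hcs : -⟪c i, x k⟫ ≤ ‖c i‖ * ‖x k‖ := by
        have := abs_real_inner_le_norm (c i) (x k)
        have := neg_abs_le ⟪c i, x k⟫
        linarith
      have hα' : -α i ≤ |α i| := by
        cases abs_cases (α i) with
        | inl h => linarith [h.1, h.2]
        | inr h => linarith [h.1]
      have hxTx : ⟪x k, T i (x k)⟫ ≤ 2 * (‖c i‖ * ‖x k‖ + |α i|) := by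
        have := hcons k
        linarith
      have hsq : (0:ℝ) ≤ (‖x k‖⁻¹)^2 := sq_nonneg _
      have hmul := mul_le_mul_of_nonneg_left hxTx hsq
      have hNN : (‖x k‖⁻¹)^2 * ‖x k‖ = ‖x k‖⁻¹ := by
        field_simp
      have hup : ⟪w, T i w⟫ ≤ 2 * ‖c i‖ * ‖x k‖⁻¹ + 2 * |α i| * (‖x k‖⁻¹)^2 := by
        rw [hwTw]
        calc (‖x k‖⁻¹)^2 * ⟪x k, T i (x k)⟫
            ≤ (‖x k‖⁻¹)^2 * (2 * (‖c i‖ * ‖x k‖ + |α i|)) := hmul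
          _ = 2 * ‖c i‖ * ((‖x k‖⁻¹)^2 * ‖x k‖) + 2 * |α i| * (‖x k‖⁻¹)^2 := by ring
          _ = 2 * ‖c i‖ * ‖x k‖⁻¹ + 2 * |α i| * (‖x k‖⁻¹)^2 := by rw [hNN]
      linarith
    exact le_antisymm hle (hpsd i v)
  -- Step C : T i v = 0
  have hTv : ‖T i v‖ = 0 := by
    by_contra hne
    have hNpos2 : 0 < ‖T i v‖ := lt_of_le_of_ne (norm_nonneg _) (Ne.symm hne)
    set N : ℝ := ‖T i v‖ ^ 2 with hNdef
    have hN : 0 < N := by positivity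
    set q : ℝ := ⟪T i v, T i (T i v)⟫ with hq
    have hq0 : 0 ≤ q := hpsd i (T i v)
    set t : ℝ := N / (q + 1) with ht
    have h0 := hpsd i (v - t • T i v)
    have hexp : ⟪v - t • T i v, T i (v - t • T i v)⟫
        = ⟪v, T i v⟫ - 2 * t * N + t^2 * q := by
      have hswap : ⟪v, T i (T i v)⟫ = ⟪T i v, T i v⟫ := by
        rw [← hsa i v (T i v)]
      rw [map_sub, map_smul, inner_sub_left, inner_sub_right, inner_sub_right,
        real_inner_smul_left, real_inner_smul_left, real_inner_smul_right,
        real_inner_smul_right, hswap, real_inner_self_eq_norm_sq]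
      ring
    rw [hexp, hvTv0] at h0
    have htpos : 0 < t := div_pos hN (by linarith)
    have : t * q < 2 * N := by
      rw [ht]
      rw [div_mul_eq_mul_div, div_lt_iff₀ (by linarith)]
      nlinarith
    nlinarith
  exact norm_eq_zero.mp hTv
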